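/- arXiv:2402.12584 — 2 statements merged into one kernel-verified Lean document; each statement's English description precedes it below -/
import Mathlib

section
/- In a balanced (n,k,r,c) assignment, for any fixed job a_i, the sum over all x-element subsets Ŝ of the servers of (max(n_{i,Ŝ} − 1, 0))² equals r(r−1)·C(c−2, x−2) − r·C(c−1, x−1) − C(c−r, x) + C(c, x). -/
/-- Binomial coefficient `C(a,b)` on integers, with the convention that it is
zero when `b < 0` or `b > a`. -/
def ch (a b : ℤ) : ℤ := if 0 ≤ b ∧ b ≤ a then ((a.toNat).choose b.toNat : ℤ) else 0
/-- A balanced `(n,k,r,c)` assignment: each of the `n` jobs is assigned to exactly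
`r` of the `c` servers, and each server is assigned exactly `k` jobs. -/
structure BalancedAssignment (n k r c : ℕ) where
  assign : Fin n → Finset (Fin c)
  job_deg : ∀ i : Fin n, (assign i).card = r
  server_deg : ∀ s : Fin c,
    (Finset.univ.filter (fun i : Fin n => s ∈ assign i)).card = k

lemma ch_natCast (a b : ℕ) : ch (a : ℤ) (b : ℤ) = (a.choose b : ℤ) := by
  unfold ch
  split
  next h => simp
  next h =>
    push_neg at h
    have hb : (a : ℤ) < b := h (by positivity)
    rw [Nat.choose_eq_zero_of_lt (by exact_mod_cast hb)]
    simp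

lemma count_supersets {c : ℕ} (x : ℕ) (T : Finset (Fin c)) (hT : T.card ≤ x) :
    ((Finset.powersetCard x (Finset.univ : Finset (Fin c))).filter
      (fun S => T ⊆ S)).card = (c - T.card).choose (x - T.card) := by
  have hcompl : (Tᶜ : Finset (Fin c)).card = c - T.card := by
    rw [Finset.card_compl, Fintype.card_fin]
  rw [← hcompl, ← Finset.card_powersetCard (x - T.card) Tᶜ]
  refine Finset.card_nbij' (fun S => S \ T) (fun U => U ∪ T) ?_ ?_ ?_ ?_
  · intro S hS
    simp only [Finset.mem_coe, Finset.mem_filter, Finset.mem_powersetCard_univ] at hS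
    rw [Finset.mem_coe, Finset.mem_powersetCard]
    constructor
    · intro a ha
      simp only [Finset.mem_sdiff] at ha
      simp [ha.2]
    · rw [Finset.card_sdiff_of_subset hS.2, hS.1]
  · intro U hU
    rw [Finset.mem_coe, Finset.mem_powersetCard] at hU
    simp only [Finset.mem_coe, Finset.mem_filter, Finset.mem_powersetCard_univ]
    have hdisj : Disjoint U T := by
      intro V hVU hVT
      intro a ha
      have h1 := hVU ha
      have h2 := hVT ha
      have := hU.1 h1
      simp only [Finset.mem_compl] at this
      exact absurd h2 this
    constructor
    · rw [Finset.card_union_of_disjoint hdisj, hU.2]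
      omega
    · exact Finset.subset_union_right
  · intro S hS
    simp only [Finset.mem_coe, Finset.mem_filter, Finset.mem_powersetCard_univ] at hS
    exact Finset.sdiff_union_of_subset hS.2
  · intro U hU
    rw [Finset.mem_coe, Finset.mem_powersetCard] at hU
    apply Finset.union_sdiff_cancel_right
    intro V hVU hVT a ha
    have := hU.1 (hVU ha)
    simp only [Finset.mem_compl] at this
    exact absurd (hVT ha) this

/-- In a balanced `(n,k,r,c)` assignment, for any fixed job `i`, the sum over
all `x`-element subsets `Ŝ` of the servers of `(max(n_{i,Ŝ} - 1, 0))²` equals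
`r(r-1)·C(c-2,x-2) - r·C(c-1,x-1) - C(c-r,x) + C(c,x)`. -/
theorem sum_excess_sq_single_job (n k r c x : ℕ) (hx1 : 1 ≤ x) (hxc : x ≤ c)
    (D : BalancedAssignment n k r c) (i : Fin n) :
    ∑ S ∈ Finset.powersetCard x (Finset.univ : Finset (Fin c)),
        (((D.assign i ∩ S).card - 1 : ℕ) : ℤ) ^ 2
      = (r : ℤ) * ((r : ℤ) - 1) * ch ((c : ℤ) - 2) ((x : ℤ) - 2)
        - (r : ℤ) * ch ((c : ℤ) - 1) ((x : ℤ) - 1)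
        - ch ((c : ℤ) - r) (x : ℤ) + ch (c : ℤ) (x : ℤ) := by
  classical
  set A := D.assign i with hAdef
  have hA : A.card = r := D.job_deg i
  have hrc : r ≤ c := by
    have h1 := Finset.card_le_univ A
    rwa [hA, Fintype.card_fin] at h1
  set P := Finset.powersetCard x (Finset.univ : Finset (Fin c)) with hP
  -- counting lemmas
  have hsingle : ∀ a : Fin c, ((P.filter (fun S => a ∈ S)).card : ℤ)
      = ((c - 1).choose (x - 1) : ℤ) := by
    intro a
    have h := count_supersets (c := c) x {a} (by simpa using hx1)
    simp only [Finset.card_singleton, Finset.singleton_subset_iff] at h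
    rw [hP, h]
  have hpair : ∀ a b : Fin c, a ≠ b →
      ((P.filter (fun S => a ∈ S ∧ b ∈ S)).card : ℤ) = ch ((c : ℤ) - 2) ((x : ℤ) - 2) := by
    intro a b hab
    have heq : P.filter (fun S => a ∈ S ∧ b ∈ S)
        = P.filter (fun S => ({a, b} : Finset (Fin c)) ⊆ S) := by
      apply Finset.filter_congr
      intro S _
      simp [Finset.insert_subset_iff]
    by_cases h2 : 2 ≤ x
    · have hcard : ({a, b} : Finset (Fin c)).card = 2 := Finset.card_pair hab
      have h := count_supersets (c := c) x {a, b} (by rw [hcard]; exact h2)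
      rw [hcard] at h
      rw [heq, hP, h]
      rw [show ((c : ℤ) - 2) = ((c - 2 : ℕ) : ℤ) by omega,
        show ((x : ℤ) - 2) = ((x - 2 : ℕ) : ℤ) by omega, ch_natCast]
    · have hx : x = 1 := by omega
      have hemp : P.filter (fun S => a ∈ S ∧ b ∈ S) = ∅ := by
        rw [Finset.filter_eq_empty_iff]
        intro S hS
        rw [hP, Finset.mem_powersetCard_univ] at hS
        rintro ⟨ha, hb⟩
        have hle : ({a, b} : Finset (Fin c)).card ≤ S.card :=
          Finset.card_le_card (by simp [Finset.insert_subset_iff, ha, hb])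
        rw [Finset.card_pair hab, hS, hx] at hle
        omega
      rw [hemp]
      unfold ch
      rw [if_neg (by omega)]
      simp
  have hempty : ((P.filter (fun S => A ∩ S = ∅)).card : ℤ) = ((c - r).choose x : ℤ) := by
    have heq : P.filter (fun S => A ∩ S = ∅) = Finset.powersetCard x Aᶜ := by
      ext S
      simp only [Finset.mem_filter, Finset.mem_powersetCard, Finset.subset_univ, true_and, hP]
      constructor
      · rintro ⟨hcard, hint⟩
        refine ⟨fun a ha => ?_, hcard⟩
        simp only [Finset.mem_compl]
        intro haA
        have : a ∈ A ∩ S := Finset.mem_inter.2 ⟨haA, ha⟩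
        simp [hint] at this
      · rintro ⟨hsub, hcard⟩
        refine ⟨hcard, ?_⟩
        rw [Finset.eq_empty_iff_forall_notMem]
        intro a ha
        rw [Finset.mem_inter] at ha
        have := hsub ha.2
        simp only [Finset.mem_compl] at this
        exact this ha.1
    rw [heq, Finset.card_powersetCard, Finset.card_compl, Fintype.card_fin, hA]
  -- expressing the inner count as a sum of indicators
  have hcard_sum : ∀ S : Finset (Fin c),
      ((A ∩ S).card : ℤ) = ∑ a ∈ A, (if a ∈ S then (1 : ℤ) else 0) := by
    intro S
    rw [← Finset.filter_mem_eq_inter, Finset.card_filter]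
    push_cast
    rfl
  -- first moment
  have hsum1 : ∑ S ∈ P, ((A ∩ S).card : ℤ) = (r : ℤ) * ((c - 1).choose (x - 1) : ℤ) := by
    rw [Finset.sum_congr rfl (fun S _ => hcard_sum S), Finset.sum_comm]
    have : ∀ a ∈ A, ∑ S ∈ P, (if a ∈ S then (1 : ℤ) else 0)
        = ((c - 1).choose (x - 1) : ℤ) := by
      intro a _
      rw [Finset.sum_boole]
      exact hsingle a
    rw [Finset.sum_congr rfl this, Finset.sum_const, hA, nsmul_eq_mul]
  -- second moment
  have hsum2 : ∑ S ∈ P, ((A ∩ S).card : ℤ) ^ 2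
      = (r : ℤ) * ((c - 1).choose (x - 1) : ℤ)
        + (r : ℤ) * ((r : ℤ) - 1) * ch ((c : ℤ) - 2) ((x : ℤ) - 2) := by
    have hsq : ∀ S ∈ P, ((A ∩ S).card : ℤ) ^ 2
        = ∑ a ∈ A, ∑ b ∈ A,
            (if a ∈ S ∧ b ∈ S then (1 : ℤ) else 0) := by
      intro S _
      rw [sq, hcard_sum S, Finset.sum_mul_sum]
      refine Finset.sum_congr rfl fun a _ => Finset.sum_congr rfl fun b _ => ?_
      by_cases h1 : a ∈ S <;> by_cases h2 : b ∈ S <;> simp [h1, h2]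
    rw [Finset.sum_congr rfl hsq, Finset.sum_comm]
    have hinner : ∀ a ∈ A, ∑ S ∈ P, ∑ b ∈ A, (if a ∈ S ∧ b ∈ S then (1 : ℤ) else 0)
        = ((c - 1).choose (x - 1) : ℤ) + ((r : ℤ) - 1) * ch ((c : ℤ) - 2) ((x : ℤ) - 2) := by
      intro a haA
      rw [Finset.sum_comm]
      have hsplit : ∀ b ∈ A, ∑ S ∈ P, (if a ∈ S ∧ b ∈ S then (1 : ℤ) else 0)
          = ((P.filter (fun S => a ∈ S ∧ b ∈ S)).card : ℤ) := fun b _ => Finset.sum_boole _ _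
      rw [Finset.sum_congr rfl hsplit, ← Finset.add_sum_erase _ _ haA]
      have h1 : ((P.filter (fun S => a ∈ S ∧ a ∈ S)).card : ℤ)
          = ((c - 1).choose (x - 1) : ℤ) := by
        have hfe : P.filter (fun S => a ∈ S ∧ a ∈ S) = P.filter (fun S => a ∈ S) :=
          Finset.filter_congr (fun S _ => by simp)
        rw [hfe]
        exact hsingle a
      have h2 : ∀ b ∈ A.erase a, ((P.filter (fun S => a ∈ S ∧ b ∈ S)).card : ℤ)
          = ch ((c : ℤ) - 2) ((x : ℤ) - 2) := by
        intro b hb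
        exact hpair a b (Ne.symm (Finset.ne_of_mem_erase hb))
      rw [h1, Finset.sum_congr rfl h2, Finset.sum_const, Finset.card_erase_of_mem haA, hA,
        nsmul_eq_mul]
      have hr1 : 1 ≤ r := by
        rw [← hA]
        exact Finset.card_pos.2 ⟨a, haA⟩
      rw [show ((r - 1 : ℕ) : ℤ) = (r : ℤ) - 1 by omega]
    rw [Finset.sum_congr rfl hinner, Finset.sum_const, hA, nsmul_eq_mul]
    ring
  -- zero indicator
  have hsum0 : ∑ S ∈ P, (if (A ∩ S).card = 0 then (1 : ℤ) else 0)
      = ((c - r).choose x : ℤ) := by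
    have : ∀ S ∈ P, (if (A ∩ S).card = 0 then (1 : ℤ) else 0)
        = (if A ∩ S = ∅ then (1 : ℤ) else 0) := by
      intro S _
      simp [Finset.card_eq_zero]
    rw [Finset.sum_congr rfl this, Finset.sum_boole]
    exact hempty
  -- total count
  have hsumc : ∑ S ∈ P, (1 : ℤ) = (c.choose x : ℤ) := by
    rw [Finset.sum_const, hP, Finset.card_powersetCard, Finset.card_univ, Fintype.card_fin,
      nsmul_eq_mul, mul_one]
  -- pointwise decomposition of the summand
  have hkey : ∀ S ∈ P, (((A ∩ S).card - 1 : ℕ) : ℤ) ^ 2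
      = ((A ∩ S).card : ℤ) ^ 2 - 2 * ((A ∩ S).card : ℤ) + 1
        - (if (A ∩ S).card = 0 then (1 : ℤ) else 0) := by
    intro S _
    rcases Nat.eq_zero_or_pos (A ∩ S).card with h | h
    · simp [h]
    · rw [if_neg (by omega), show ((A ∩ S).card - 1 : ℕ) = (A ∩ S).card - 1 from rfl]
      have : (((A ∩ S).card - 1 : ℕ) : ℤ) = ((A ∩ S).card : ℤ) - 1 := by omega
      rw [this]
      ring
  rw [Finset.sum_congr rfl hkey]
  rw [Finset.sum_sub_distrib, Finset.sum_add_distrib, Finset.sum_sub_distrib]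
  have hsum1' : ∑ S ∈ P, 2 * ((A ∩ S).card : ℤ)
      = 2 * ((r : ℤ) * ((c - 1).choose (x - 1) : ℤ)) := by
    rw [← Finset.mul_sum, hsum1]
  rw [hsum2, hsum0, hsumc, hsum1']
  -- convert ch's on the RHS
  have hc1 : ch ((c : ℤ) - 1) ((x : ℤ) - 1) = ((c - 1).choose (x - 1) : ℤ) := by
    rw [show ((c : ℤ) - 1) = ((c - 1 : ℕ) : ℤ) by omega,
      show ((x : ℤ) - 1) = ((x - 1 : ℕ) : ℤ) by omega, ch_natCast]
  have hcr : ch ((c : ℤ) - r) (x : ℤ) = ((c - r).choose x : ℤ) := by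
    rw [show ((c : ℤ) - r) = ((c - r : ℕ) : ℤ) by omega, ch_natCast]
  have hcx : ch (c : ℤ) (x : ℤ) = (c.choose x : ℤ) := ch_natCast c x
  rw [hc1, hcr, hcx]
  ring
end

section
/- If a proximally compact balanced (n,k,r,c) assignment D exists, then for every x with 1 ≤ x ≤ c and every balanced (n,k,r,c) assignment D₁: ∑_{m=0}^{r} m^{D₁}(m)·g(m,x) ≥ ∑_{m=0}^{r} m^{D}(m)·g(m,x). Consequently D minimizes the variance of the number of distinct jobs received among all balanced (n,k,r,c) assignments. -/
/-- `pairCount D m` : the number of unordered pairs of distinct jobs that are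
assigned together to exactly `m` common servers. -/
def pairCount {n k r c : ℕ} (D : BalancedAssignment n k r c) (m : ℕ) : ℕ :=
  (Finset.univ.filter (fun p : Fin n × Fin n =>
    p.1 < p.2 ∧ (D.assign p.1 ∩ D.assign p.2).card = m)).card
/-- The number of distinct jobs assigned to some server in the subset `S`. -/
def numDistinct {n k r c : ℕ} (D : BalancedAssignment n k r c)
    (S : Finset (Fin c)) : ℕ :=
  (Finset.univ.filter (fun i : Fin n => (D.assign i ∩ S).Nonempty)).card
/-- `gval c r m x` : the value of `g(m,x)`, the sum over `x`-subsets of the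
servers of `max(n_i - 1, 0) * max(n_j - 1, 0)` for a pair of jobs, each on `r`
of the `c` servers, sharing exactly `m` servers.  It is given by the closed
form `g(0,x)` together with the recursion for the difference `g(m+1,x)-g(m,x)`. -/
def gval (c r m x : ℕ) : ℤ :=
  (r : ℤ) ^ 2 * ch ((c : ℤ) - 2) ((x : ℤ) - 2)
    - 2 * r * ch ((c : ℤ) - 1) ((x : ℤ) - 1)
    + ch (c : ℤ) (x : ℤ)
    - 2 * ch ((c : ℤ) - r) (x : ℤ)
    + 2 * r * ch ((c : ℤ) - r - 1) ((x : ℤ) - 1)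
    + ch ((c : ℤ) - 2 * r) (x : ℤ)
  + ∑ j ∈ Finset.range m,
      (ch ((c : ℤ) - 2) ((x : ℤ) - 1) - 2 * ch ((c : ℤ) - r - 1) ((x : ℤ) - 1)
        + ch ((c : ℤ) - 2 * r + j) ((x : ℤ) - 1))
/-- Mean of the number of distinct jobs received when a uniformly random
`x`-subset of the `c` servers communicates with the master. -/
noncomputable def meanDistinct {n k r c : ℕ} (D : BalancedAssignment n k r c)
    (x : ℕ) : ℚ :=
  (∑ S ∈ Finset.powersetCard x (Finset.univ : Finset (Fin c)),
    (numDistinct D S : ℚ)) / (c.choose x)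

/-- Variance of the number of distinct jobs received when a uniformly random
`x`-subset of the `c` servers communicates with the master. -/
noncomputable def varDistinct {n k r c : ℕ} (D : BalancedAssignment n k r c)
    (x : ℕ) : ℚ :=
  (∑ S ∈ Finset.powersetCard x (Finset.univ : Finset (Fin c)),
    ((numDistinct D S : ℚ) - meanDistinct D x) ^ 2) / (c.choose x)



lemma ch_nonneg (a b : ℤ) : 0 ≤ ch a b := by
  unfold ch; split <;> positivity

lemma ch_nat (a b : ℕ) : ch a b = (a.choose b : ℤ) := by
  unfold ch
  split_ifs with h
  · simp
  · push_neg at h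
    have : a < b := by
      rcases lt_or_ge (a:ℤ) b with h' | h'
      · exact_mod_cast h'
      · exact absurd (h (by positivity)) (not_lt.2 (by exact_mod_cast h'))
    simp [Nat.choose_eq_zero_of_lt this]

lemma ch_pascal (a b : ℤ) (hb : 1 ≤ b) : ch (a+1) b = ch a b + ch a (b-1) := by
  rcases lt_or_ge a (b-1) with h | h
  · have h1 : ¬ b ≤ a + 1 := by omega
    have h2 : ¬ b ≤ a := by omega
    have h3 : ¬ b - 1 ≤ a := by omega
    simp [ch, h1, h2, h3]
  · have ha : 0 ≤ a := by omega
    have hb0 : 0 ≤ b - 1 := by omega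
    -- a.toNat ≥ (b-1).toNat
    rcases lt_or_ge a b with h2 | h2
    · -- a = b - 1
      have hab : a = b - 1 := by omega
      have h1 : ¬ b ≤ a := by omega
      simp only [ch, h1, and_false, if_false]
      have : b ≤ a + 1 := by omega
      rw [if_pos ⟨by omega, this⟩, if_pos ⟨hb0, by omega⟩]
      have e1 : (a+1).toNat = b.toNat := by omega
      have e2 : a.toNat = (b-1).toNat := by omega
      rw [e1, e2]
      simp [Nat.choose_self]
    · -- a ≥ b
      rw [ch, if_pos ⟨by omega, by omega⟩, ch, if_pos ⟨by omega, h2⟩,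
        ch, if_pos ⟨hb0, by omega⟩]
      have e1 : (a+1).toNat = a.toNat + 1 := by omega
      have e2 : b.toNat = (b-1).toNat + 1 := by omega
      rw [e1, e2, Nat.choose_succ_succ]
      push_cast; ring

lemma ch_mono_succ (a b : ℤ) (hb : 0 ≤ b) : ch a b ≤ ch (a+1) b := by
  rcases eq_or_lt_of_le hb with h | h
  · subst h
    unfold ch
    split_ifs with h1 h2 h2
    · simp
    · omega
    · positivity
    · exact le_refl 0
  · rw [ch_pascal a b (by omega)]
    linarith [ch_nonneg a (b-1)]

lemma ch_mono (a a' b : ℤ) (hb : 0 ≤ b) (h : a ≤ a') : ch a b ≤ ch a' b := by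
  have h2 : ∀ d : ℕ, ch a b ≤ ch (a + d) b := by
    intro d
    induction d with
    | zero => simp
    | succ d ih =>
        calc ch a b ≤ ch (a + d) b := ih
        _ ≤ ch (a + d + 1) b := ch_mono_succ _ _ hb
        _ = ch (a + (d+1)) b := by norm_num; ring_nf
  have := h2 (a' - a).toNat
  rwa [show a + ((a' - a).toNat : ℤ) = a' by omega] at this


section
variable (f : ℕ → ℤ)

lemma support_line (hconv : ∀ i j : ℕ, i ≤ j → f (i+1) - f i ≤ f (j+1) - f j)
    (ℓ m : ℕ) : f ℓ + ((m:ℤ) - ℓ) * (f (ℓ+1) - f ℓ) ≤ f m := by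
  rcases le_or_gt ℓ m with h | h
  · -- upward induction
    induction m, h using Nat.le_induction with
    | base => simp
    | succ m hm ih =>
        have h1 : f (ℓ+1) - f ℓ ≤ f (m+1) - f m := hconv ℓ m hm
        have : (0:ℤ) ≤ (m:ℤ) - ℓ := by
          have h2 : (ℓ:ℤ) ≤ m := by exact_mod_cast hm
          linarith
        push_cast
        nlinarith [ih]
  · -- downward: show f ℓ - f m ≤ (ℓ - m) * Δℓ  for m ≤ ℓ
    have key : ∀ L : ℕ, m ≤ L → f L - f m ≤ ((L:ℤ) - m) * (f (L+1) - f L) := by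
      intro L hL
      induction L, hL using Nat.le_induction with
      | base => simp
      | succ L hL ih =>
          have h1 : f (L+1) - f L ≤ f (L+2) - f (L+1) := hconv (L+1) (L+1) le_rfl |> fun _ => hconv L (L+1) (by omega)
          have h2 : (0:ℤ) ≤ (L:ℤ) - m := by
            have : (m:ℤ) ≤ L := by exact_mod_cast hL
            linarith
          have h3 : f (L+1) - f L ≤ f (L+1+1) - f (L+1) := hconv L (L+1) (by omega)
          push_cast
          nlinarith [ih]
    have := key ℓ (by omega)
    nlinarith [this]
end

lemma core_exchange (f : ℕ → ℤ) (hconv : ∀ i j : ℕ, i ≤ j → f (i+1) - f i ≤ f (j+1) - f j)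
    (R : ℕ) (p q : ℕ → ℕ)
    (hN : ∑ m ∈ Finset.range (R+1), (p m : ℤ) = ∑ m ∈ Finset.range (R+1), (q m : ℤ))
    (hM : ∑ m ∈ Finset.range (R+1), (m : ℤ) * p m = ∑ m ∈ Finset.range (R+1), (m:ℤ) * q m)
    (ℓ : ℕ) (hsupp : ∀ m, p m ≠ 0 → m = ℓ ∨ m = ℓ + 1) :
    ∑ m ∈ Finset.range (R+1), (p m : ℤ) * f m ≤ ∑ m ∈ Finset.range (R+1), (q m : ℤ) * f m := by
  set Δ : ℤ := f (ℓ+1) - f ℓ with hΔ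
  have hline : ∀ m : ℕ, f ℓ + ((m:ℤ) - ℓ) * Δ ≤ f m := fun m => support_line f hconv ℓ m
  have hp : ∀ m ∈ Finset.range (R+1), (p m : ℤ) * f m = (p m : ℤ) * (f ℓ + ((m:ℤ) - ℓ) * Δ) := by
    intro m _
    rcases Nat.eq_zero_or_pos (p m) with h | h
    · simp [h]
    · rcases hsupp m (by omega) with rfl | rfl
      · ring_nf
      · push_cast; rw [hΔ]; ring
  have hq : ∀ m ∈ Finset.range (R+1), (q m : ℤ) * (f ℓ + ((m:ℤ) - ℓ) * Δ) ≤ (q m : ℤ) * f m := by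
    intro m _
    exact mul_le_mul_of_nonneg_left (hline m) (by positivity)
  calc ∑ m ∈ Finset.range (R+1), (p m : ℤ) * f m
      = ∑ m ∈ Finset.range (R+1), (p m : ℤ) * (f ℓ + ((m:ℤ) - ℓ) * Δ) := Finset.sum_congr rfl hp
    _ = (f ℓ - (ℓ:ℤ) * Δ) * ∑ m ∈ Finset.range (R+1), (p m : ℤ)
          + Δ * ∑ m ∈ Finset.range (R+1), (m:ℤ) * p m := by
        rw [Finset.mul_sum, Finset.mul_sum, ← Finset.sum_add_distrib]
        exact Finset.sum_congr rfl (fun m _ => by ring)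
    _ = (f ℓ - (ℓ:ℤ) * Δ) * ∑ m ∈ Finset.range (R+1), (q m : ℤ)
          + Δ * ∑ m ∈ Finset.range (R+1), (m:ℤ) * q m := by rw [hN, hM]
    _ = ∑ m ∈ Finset.range (R+1), (q m : ℤ) * (f ℓ + ((m:ℤ) - ℓ) * Δ) := by
        rw [Finset.mul_sum, Finset.mul_sum, ← Finset.sum_add_distrib]
        exact Finset.sum_congr rfl (fun m _ => by ring)
    _ ≤ ∑ m ∈ Finset.range (R+1), (q m : ℤ) * f m := Finset.sum_le_sum hq




open Finset

variable {n k r c : ℕ}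

/-- The set of ordered pairs `(i,j)` with `i < j`. -/
def pairs (n : ℕ) : Finset (Fin n × Fin n) :=
  Finset.univ.filter (fun p : Fin n × Fin n => p.1 < p.2)

lemma pairs_in_card (B : Finset (Fin n)) :
    ((pairs n).filter (fun p => p.1 ∈ B ∧ p.2 ∈ B)).card = Nat.choose B.card 2 := by
  classical
  set T := B ×ˢ B with hT
  have h1 : (pairs n).filter (fun p => p.1 ∈ B ∧ p.2 ∈ B)
      = T.filter (fun p => p.1 < p.2) := by
    ext p
    simp only [pairs, mem_filter, mem_univ, true_and, hT, Finset.mem_product]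
    tauto
  have h2 := Finset.card_filter_add_card_filter_not
    (s := T) (p := fun p : Fin n × Fin n => p.1 < p.2)
  have h3 := Finset.card_filter_add_card_filter_not
    (s := T.filter (fun p : Fin n × Fin n => ¬ p.1 < p.2))
    (p := fun p : Fin n × Fin n => p.2 < p.1)
  have e1 : (T.filter (fun p => ¬ p.1 < p.2)).filter (fun p => p.2 < p.1)
      = T.filter (fun p => p.2 < p.1) := by
    rw [Finset.filter_filter]
    apply Finset.filter_congr
    intro p _
    constructor
    · exact fun h => h.2
    · exact fun h => ⟨asymm h, h⟩
  have e2 : (T.filter (fun p => ¬ p.1 < p.2)).filter (fun p => ¬ p.2 < p.1)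
      = T.filter (fun p => p.1 = p.2) := by
    rw [Finset.filter_filter]
    apply Finset.filter_congr
    intro p _
    constructor
    · exact fun h => le_antisymm (not_lt.1 h.2) (not_lt.1 h.1)
    · exact fun h => ⟨by omega, by omega⟩
  have e3 : (T.filter (fun p => p.2 < p.1)).card = (T.filter (fun p => p.1 < p.2)).card := by
    apply Finset.card_nbij' (fun p => p.swap) (fun p => p.swap)
    · intro p hp
      simp only [hT, Finset.mem_coe, Finset.mem_filter, Finset.mem_product] at hp ⊢
      exact ⟨⟨hp.1.2, hp.1.1⟩, hp.2⟩
    · intro p hp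
      simp only [hT, Finset.mem_coe, Finset.mem_filter, Finset.mem_product] at hp ⊢
      exact ⟨⟨hp.1.2, hp.1.1⟩, hp.2⟩
    · intro p _; simp
    · intro p _; simp
  have e4 : (T.filter (fun p => p.1 = p.2)).card = B.card := by
    apply Finset.card_nbij' (fun p => p.1) (fun a => (a, a))
    · intro p hp
      simp only [hT, Finset.mem_coe, Finset.mem_filter, Finset.mem_product] at hp
      exact hp.1.1
    · intro a ha
      simp only [hT, Finset.mem_coe, Finset.mem_filter, Finset.mem_product]
      exact ⟨⟨ha, ha⟩, by simp⟩
    · intro p hp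
      simp only [hT, Finset.mem_coe, Finset.mem_filter, Finset.mem_product] at hp
      exact Prod.ext rfl hp.2
    · intro a _; rfl
  have e5 : T.card = B.card * B.card := by
    rw [hT, Finset.card_product]
  rw [e1, e2] at h3
  have e6 : B.card * (B.card - 1) = B.card * B.card - B.card := by
    cases hB : B.card with
    | zero => rfl
    | succ t => rw [Nat.succ_sub_one, Nat.mul_succ, Nat.add_sub_cancel]
  rw [h1, Nat.choose_two_right]
  omega

lemma card_inter_as_sum (D : BalancedAssignment n k r c) (p : Fin n × Fin n) :
    (D.assign p.1 ∩ D.assign p.2).card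
      = ∑ s : Fin c, if s ∈ D.assign p.1 ∧ s ∈ D.assign p.2 then 1 else 0 := by
  classical
  rw [← Finset.card_filter]
  congr 1
  ext s
  simp [Finset.mem_inter]

lemma sum_inter_card (D : BalancedAssignment n k r c) :
    ∑ p ∈ pairs n, (D.assign p.1 ∩ D.assign p.2).card = c * Nat.choose k 2 := by
  classical
  calc ∑ p ∈ pairs n, (D.assign p.1 ∩ D.assign p.2).card
      = ∑ p ∈ pairs n, ∑ s : Fin c, (if s ∈ D.assign p.1 ∧ s ∈ D.assign p.2 then 1 else 0) :=
        Finset.sum_congr rfl (fun p _ => card_inter_as_sum D p)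
    _ = ∑ s : Fin c, ∑ p ∈ pairs n, (if s ∈ D.assign p.1 ∧ s ∈ D.assign p.2 then 1 else 0) :=
        Finset.sum_comm
    _ = ∑ s : Fin c, Nat.choose k 2 := by
        apply Finset.sum_congr rfl
        intro s _
        rw [← Finset.card_filter]
        have : ((pairs n).filter (fun p => s ∈ D.assign p.1 ∧ s ∈ D.assign p.2))
            = ((pairs n).filter (fun p =>
                p.1 ∈ Finset.univ.filter (fun i : Fin n => s ∈ D.assign i)
                ∧ p.2 ∈ Finset.univ.filter (fun i : Fin n => s ∈ D.assign i))) := by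
          apply Finset.filter_congr; intro p _; simp
        rw [this, pairs_in_card, D.server_deg s]
    _ = c * Nat.choose k 2 := by
        rw [Finset.sum_const, Finset.card_univ, Fintype.card_fin, smul_eq_mul]

lemma fiber_sum (D : BalancedAssignment n k r c) (w : ℕ → ℤ) :
    ∑ m ∈ Finset.range (r+1), (pairCount D m : ℤ) * w m
      = ∑ p ∈ pairs n, w ((D.assign p.1 ∩ D.assign p.2).card) := by
  classical
  have hmap : ∀ p ∈ pairs n,
      (D.assign p.1 ∩ D.assign p.2).card ∈ Finset.range (r+1) := by
    intro p _
    rw [Finset.mem_range]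
    have := Finset.card_le_card
      (Finset.inter_subset_left (s₁ := D.assign p.1) (s₂ := D.assign p.2))
    rw [D.job_deg p.1] at this
    omega
  rw [← Finset.sum_fiberwise_of_maps_to hmap
    (fun p => w ((D.assign p.1 ∩ D.assign p.2).card))]
  apply Finset.sum_congr rfl
  intro m _
  have hpc : pairCount D m
      = (((pairs n).filter (fun p => (D.assign p.1 ∩ D.assign p.2).card = m))).card := by
    rw [pairCount, pairs, Finset.filter_filter]
  rw [hpc]
  have hterm : ∀ p ∈ (pairs n).filter
      (fun p => (D.assign p.1 ∩ D.assign p.2).card = m),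
      w ((D.assign p.1 ∩ D.assign p.2).card) = w m := by
    intro p hp
    rw [Finset.mem_filter] at hp
    rw [hp.2]
  rw [Finset.sum_congr rfl hterm, Finset.sum_const, nsmul_eq_mul]

lemma count_disjoint (t : Finset (Fin c)) (x : ℕ) :
    ((Finset.powersetCard x (Finset.univ : Finset (Fin c))).filter
        (fun S => Disjoint t S)).card = (c - t.card).choose x := by
  classical
  have h : (Finset.powersetCard x (Finset.univ : Finset (Fin c))).filter
        (fun S => Disjoint t S) = Finset.powersetCard x tᶜ := by
    ext S
    simp only [Finset.mem_filter, Finset.mem_powersetCard, Finset.subset_univ, true_and]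
    constructor
    · rintro ⟨hx, hd⟩
      refine ⟨fun a ha => Finset.mem_compl.2 ?_, hx⟩
      exact fun hat => (Finset.disjoint_left.1 hd hat) ha
    · rintro ⟨hsub, hx⟩
      refine ⟨hx, Finset.disjoint_left.2 fun a hat haS => ?_⟩
      exact (Finset.mem_compl.1 (hsub haS)) hat
  rw [h, Finset.card_powersetCard, Finset.card_compl, Fintype.card_fin]



lemma sq_sum_split (g : Fin n → ℤ) (hg : ∀ i, g i * g i = g i) :
    (∑ i, g i)^2 = (∑ i, g i) + 2 * ∑ p ∈ pairs n, g p.1 * g p.2 := by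
  classical
  have h0 : (∑ i, g i)^2 = ∑ p ∈ (univ ×ˢ univ : Finset (Fin n × Fin n)), g p.1 * g p.2 := by
    rw [sq, Finset.sum_mul_sum, ← Finset.sum_product']
  have h1 := Finset.sum_filter_add_sum_filter_not
    (univ ×ˢ univ : Finset (Fin n × Fin n)) (fun p => p.1 < p.2) (fun p => g p.1 * g p.2)
  have h2 := Finset.sum_filter_add_sum_filter_not
    ((univ ×ˢ univ : Finset (Fin n × Fin n)).filter (fun p => ¬ p.1 < p.2))
    (fun p => p.2 < p.1) (fun p => g p.1 * g p.2)
  have e1 : ((univ ×ˢ univ : Finset (Fin n × Fin n)).filter (fun p => ¬ p.1 < p.2)).filter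
      (fun p => p.2 < p.1) = (univ ×ˢ univ : Finset (Fin n × Fin n)).filter (fun p => p.2 < p.1) := by
    rw [Finset.filter_filter]
    apply Finset.filter_congr
    intro p _
    exact ⟨fun h => h.2, fun h => ⟨asymm h, h⟩⟩
  have e2 : ((univ ×ˢ univ : Finset (Fin n × Fin n)).filter (fun p => ¬ p.1 < p.2)).filter
      (fun p => ¬ p.2 < p.1) = (univ ×ˢ univ : Finset (Fin n × Fin n)).filter (fun p => p.1 = p.2) := by
    rw [Finset.filter_filter]
    apply Finset.filter_congr
    intro p _
    constructor
    · exact fun h => le_antisymm (not_lt.1 h.2) (not_lt.1 h.1)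
    · exact fun h => ⟨by omega, by omega⟩
  have e3 : ∑ p ∈ (univ ×ˢ univ : Finset (Fin n × Fin n)).filter (fun p => p.2 < p.1),
        g p.1 * g p.2
      = ∑ p ∈ (univ ×ˢ univ : Finset (Fin n × Fin n)).filter (fun p => p.1 < p.2),
        g p.1 * g p.2 := by
    apply Finset.sum_nbij' (fun p => p.swap) (fun p => p.swap)
    · intro p hp; simp only [Finset.mem_filter, Finset.mem_product] at hp ⊢
      exact ⟨⟨Finset.mem_univ _, Finset.mem_univ _⟩, hp.2⟩
    · intro p hp; simp only [Finset.mem_filter, Finset.mem_product] at hp ⊢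
      exact ⟨⟨Finset.mem_univ _, Finset.mem_univ _⟩, hp.2⟩
    · intro p _; simp
    · intro p _; simp
    · intro p _; exact mul_comm _ _
  have e4 : ∑ p ∈ (univ ×ˢ univ : Finset (Fin n × Fin n)).filter (fun p => p.1 = p.2),
        g p.1 * g p.2 = ∑ i, g i := by
    apply Finset.sum_nbij' (fun p => p.1) (fun i => (i, i))
    · intro p _; exact Finset.mem_univ _
    · intro i _
      simp only [Finset.mem_filter, Finset.mem_product]
      exact ⟨⟨Finset.mem_univ _, Finset.mem_univ _⟩, by simp⟩
    · intro p hp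
      simp only [Finset.mem_filter, Finset.mem_product] at hp
      exact Prod.ext rfl hp.2
    · intro i _; rfl
    · intro p hp
      simp only [Finset.mem_filter, Finset.mem_product] at hp
      rw [← hp.2, hg]
  have hpairs : pairs n = (univ ×ˢ univ : Finset (Fin n × Fin n)).filter (fun p => p.1 < p.2) := by
    ext p; simp [pairs, Finset.mem_product]
  rw [e1, e2] at h2
  rw [hpairs]
  linarith [h0, h1, h2, e3, e4]


section Main

open Finset

variable {n k r c : ℕ}

/-- The m-dependent kernel. -/
def SW (D : BalancedAssignment n k r c) (x : ℕ) : ℤ :=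
  ∑ m ∈ Finset.range (r+1), (pairCount D m : ℤ) * ch ((c:ℤ) - 2*r + m) x

def Kconst (c r x : ℕ) : ℤ :=
  ch ((c:ℤ) - 2) ((x:ℤ) - 1) - 2 * ch ((c:ℤ) - r - 1) ((x:ℤ) - 1)

def Econst (c r x : ℕ) : ℤ :=
  (r : ℤ) ^ 2 * ch ((c : ℤ) - 2) ((x : ℤ) - 2)
    - 2 * r * ch ((c : ℤ) - 1) ((x : ℤ) - 1)
    + ch (c : ℤ) (x : ℤ)
    - 2 * ch ((c : ℤ) - r) (x : ℤ)
    + 2 * r * ch ((c : ℤ) - r - 1) ((x : ℤ) - 1)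

lemma gval_decomp (c r x : ℕ) (hx : 1 ≤ x) (m : ℕ) :
    gval c r m x = Econst c r x + Kconst c r x * m + ch ((c:ℤ) - 2*r + m) x := by
  induction m with
  | zero =>
      simp only [gval, Econst, Kconst, Finset.range_zero, Finset.sum_empty,
        Nat.cast_zero, add_zero, mul_zero]
  | succ m ih =>
      have hstep : gval c r (m+1) x
          = gval c r m x + (Kconst c r x + ch ((c:ℤ) - 2*r + m) ((x:ℤ) - 1)) := by
        simp only [gval, Kconst, Finset.sum_range_succ]
        ring
      have hp : ch ((c:ℤ) - 2*r + (m+1 : ℕ)) x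
          = ch ((c:ℤ) - 2*r + m) x + ch ((c:ℤ) - 2*r + m) ((x:ℤ) - 1) := by
        have h := ch_pascal ((c:ℤ) - 2*r + m) x (by exact_mod_cast hx)
        rw [← h]
        congr 1
        push_cast
        ring
      rw [hstep, ih, hp]
      push_cast
      ring

lemma sum_pc (D : BalancedAssignment n k r c) :
    ∑ m ∈ Finset.range (r+1), (pairCount D m : ℤ) = ((pairs n).card : ℤ) := by
  have := fiber_sum D (fun _ => (1:ℤ))
  simpa using this

lemma sum_mpc (D : BalancedAssignment n k r c) :
    ∑ m ∈ Finset.range (r+1), (m : ℤ) * (pairCount D m : ℤ)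
      = ((c * Nat.choose k 2 : ℕ) : ℤ) := by
  have h := fiber_sum D (fun m => (m:ℤ))
  have h2 : ∑ m ∈ Finset.range (r+1), (m : ℤ) * (pairCount D m : ℤ)
      = ∑ m ∈ Finset.range (r+1), (pairCount D m : ℤ) * (m : ℤ) := by
    exact Finset.sum_congr rfl (fun m _ => mul_comm _ _)
  rw [h2, h, ← sum_inter_card D]
  push_cast
  rfl

lemma gsum (D : BalancedAssignment n k r c) (x : ℕ) (hx : 1 ≤ x) :
    ∑ m ∈ Finset.range (r+1), (pairCount D m : ℤ) * gval c r m x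
      = Econst c r x * ((pairs n).card : ℤ)
        + Kconst c r x * ((c * Nat.choose k 2 : ℕ) : ℤ) + SW D x := by
  have h : ∀ m ∈ Finset.range (r+1),
      (pairCount D m : ℤ) * gval c r m x
        = Econst c r x * (pairCount D m : ℤ)
          + Kconst c r x * ((m:ℤ) * (pairCount D m : ℤ))
          + (pairCount D m : ℤ) * ch ((c:ℤ) - 2*r + m) x := by
    intro m _
    rw [gval_decomp c r x hx m]
    ring
  rw [Finset.sum_congr rfl h, Finset.sum_add_distrib, Finset.sum_add_distrib,
    ← Finset.mul_sum, ← Finset.mul_sum, sum_pc, sum_mpc]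
  rfl

lemma SW_pairs (D : BalancedAssignment n k r c) (x : ℕ) :
    SW D x = ∑ p ∈ pairs n,
      (((c - (D.assign p.1 ∪ D.assign p.2).card).choose x : ℕ) : ℤ) := by
  rw [SW, fiber_sum D (fun m => ch ((c:ℤ) - 2*r + m) x)]
  apply Finset.sum_congr rfl
  intro p _
  set A := D.assign p.1
  set B := D.assign p.2
  have hu : (A ∪ B).card + (A ∩ B).card = r + r := by
    rw [Finset.card_union_add_card_inter, D.job_deg p.1, D.job_deg p.2]
  have huc : (A ∪ B).card ≤ c := by
    have := Finset.card_le_univ (A ∪ B)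
    simpa using this
  have harg : (c:ℤ) - 2*r + ((A ∩ B).card : ℤ) = ((c - (A ∪ B).card : ℕ) : ℤ) := by
    have h1 : ((A ∪ B).card : ℤ) + ((A ∩ B).card : ℤ) = (r:ℤ) + r := by exact_mod_cast hu
    rw [Nat.cast_sub huc]
    linarith
  rw [harg, ch_nat]

/-- number of "emptily-hit" jobs -/
def Zc (D : BalancedAssignment n k r c) (S : Finset (Fin c)) : ℕ :=
  (Finset.univ.filter (fun i : Fin n => Disjoint (D.assign i) S)).card

lemma nd_Z (D : BalancedAssignment n k r c) (S : Finset (Fin c)) :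
    numDistinct D S + Zc D S = n := by
  classical
  have h := Finset.card_filter_add_card_filter_not
    (s := (Finset.univ : Finset (Fin n)))
    (p := fun i => (D.assign i ∩ S).Nonempty)
  have e : (Finset.univ.filter (fun i : Fin n => ¬ (D.assign i ∩ S).Nonempty))
      = Finset.univ.filter (fun i : Fin n => Disjoint (D.assign i) S) := by
    apply Finset.filter_congr
    intro i _
    rw [Finset.not_nonempty_iff_eq_empty, ← Finset.disjoint_iff_inter_eq_empty]
  rw [e] at h
  rw [numDistinct, Zc]
  rw [h, Finset.card_univ, Fintype.card_fin]

lemma Zc_cast (D : BalancedAssignment n k r c) (S : Finset (Fin c)) :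
    (Zc D S : ℤ) = ∑ i : Fin n, (if Disjoint (D.assign i) S then (1:ℤ) else 0) := by
  rw [Zc, Finset.card_filter]
  push_cast
  rfl

lemma sumZ (D : BalancedAssignment n k r c) (x : ℕ) :
    ∑ S ∈ Finset.powersetCard x (Finset.univ : Finset (Fin c)), (Zc D S : ℤ)
      = (n : ℤ) * ((c - r).choose x : ℕ) := by
  classical
  have h : ∀ S ∈ Finset.powersetCard x (Finset.univ : Finset (Fin c)),
      (Zc D S : ℤ) = ∑ i : Fin n, (if Disjoint (D.assign i) S then (1:ℤ) else 0) :=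
    fun S _ => Zc_cast D S
  rw [Finset.sum_congr rfl h, Finset.sum_comm]
  have h2 : ∀ i : Fin n,
      ∑ S ∈ Finset.powersetCard x (Finset.univ : Finset (Fin c)),
        (if Disjoint (D.assign i) S then (1:ℤ) else 0)
      = (((c - r).choose x : ℕ) : ℤ) := by
    intro i
    rw [Finset.sum_boole]
    rw [count_disjoint (D.assign i) x, D.job_deg i]
  rw [Finset.sum_congr rfl (fun i _ => h2 i), Finset.sum_const, Finset.card_univ,
    Fintype.card_fin, nsmul_eq_mul]

lemma sumZsq (D : BalancedAssignment n k r c) (x : ℕ) :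
    ∑ S ∈ Finset.powersetCard x (Finset.univ : Finset (Fin c)), (Zc D S : ℤ)^2
      = (n : ℤ) * ((c - r).choose x : ℕ) + 2 * SW D x := by
  classical
  have hexp : ∀ S ∈ Finset.powersetCard x (Finset.univ : Finset (Fin c)),
      (Zc D S : ℤ)^2 = (Zc D S : ℤ)
        + 2 * ∑ p ∈ pairs n,
            (if Disjoint (D.assign p.1) S then (1:ℤ) else 0)
              * (if Disjoint (D.assign p.2) S then (1:ℤ) else 0) := by
    intro S _
    rw [Zc_cast D S]
    exact sq_sum_split (fun i => if Disjoint (D.assign i) S then (1:ℤ) else 0)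
      (fun i => by split_ifs <;> ring)
  rw [Finset.sum_congr rfl hexp, Finset.sum_add_distrib, sumZ D x, ← Finset.mul_sum]
  congr 1
  rw [Finset.sum_comm, SW_pairs D x]
  congr 1
  apply Finset.sum_congr rfl
  intro p _
  have hterm : ∀ S ∈ Finset.powersetCard x (Finset.univ : Finset (Fin c)),
      (if Disjoint (D.assign p.1) S then (1:ℤ) else 0)
        * (if Disjoint (D.assign p.2) S then (1:ℤ) else 0)
      = (if Disjoint (D.assign p.1 ∪ D.assign p.2) S then (1:ℤ) else 0) := by
    intro S _
    by_cases h1 : Disjoint (D.assign p.1) S <;>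
      by_cases h2 : Disjoint (D.assign p.2) S <;>
        simp [Finset.disjoint_union_left, h1, h2]
  rw [Finset.sum_congr rfl hterm, Finset.sum_boole,
    count_disjoint (D.assign p.1 ∪ D.assign p.2) x]

lemma nd_cast (D : BalancedAssignment n k r c) (S : Finset (Fin c)) :
    (numDistinct D S : ℚ) = (n : ℚ) - (Zc D S : ℚ) := by
  have h := nd_Z D S
  have h2 : ((numDistinct D S : ℕ) : ℚ) + ((Zc D S : ℕ) : ℚ) = (n : ℚ) := by
    exact_mod_cast h
  linarith

lemma sumZQ (D : BalancedAssignment n k r c) (x : ℕ) :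
    ∑ S ∈ Finset.powersetCard x (Finset.univ : Finset (Fin c)), (Zc D S : ℚ)
      = (n : ℚ) * ((c - r).choose x : ℕ) := by
  have h := sumZ D x
  exact_mod_cast congrArg (fun z : ℤ => (z : ℚ)) h

lemma sumZsqQ (D : BalancedAssignment n k r c) (x : ℕ) :
    ∑ S ∈ Finset.powersetCard x (Finset.univ : Finset (Fin c)), (Zc D S : ℚ)^2
      = (n : ℚ) * ((c - r).choose x : ℕ) + 2 * (SW D x : ℚ) := by
  have h := sumZsq D x
  exact_mod_cast congrArg (fun z : ℤ => (z : ℚ)) h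

lemma card_pwc (c x : ℕ) :
    ((Finset.powersetCard x (Finset.univ : Finset (Fin c))).card : ℚ) = (c.choose x : ℚ) := by
  rw [Finset.card_powersetCard, Finset.card_univ, Fintype.card_fin]

lemma sum_nd (D : BalancedAssignment n k r c) (x : ℕ) :
    ∑ S ∈ Finset.powersetCard x (Finset.univ : Finset (Fin c)), (numDistinct D S : ℚ)
      = (c.choose x : ℚ) * n - (n : ℚ) * ((c - r).choose x : ℕ) := by
  rw [Finset.sum_congr rfl (fun S _ => nd_cast D S), Finset.sum_sub_distrib,
    Finset.sum_const, sumZQ D x, nsmul_eq_mul, card_pwc]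

lemma sum_ndsq (D : BalancedAssignment n k r c) (x : ℕ) :
    ∑ S ∈ Finset.powersetCard x (Finset.univ : Finset (Fin c)), (numDistinct D S : ℚ)^2
      = (c.choose x : ℚ) * n^2 - 2 * n * ((n : ℚ) * ((c - r).choose x : ℕ))
        + ((n : ℚ) * ((c - r).choose x : ℕ) + 2 * (SW D x : ℚ)) := by
  have h : ∀ S ∈ Finset.powersetCard x (Finset.univ : Finset (Fin c)),
      (numDistinct D S : ℚ)^2
        = (n:ℚ)^2 - 2 * n * (Zc D S : ℚ) + (Zc D S : ℚ)^2 := by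
    intro S _
    rw [nd_cast D S]
    ring
  rw [Finset.sum_congr rfl h, Finset.sum_add_distrib, Finset.sum_sub_distrib,
    Finset.sum_const, sumZsqQ D x, nsmul_eq_mul, card_pwc, ← Finset.mul_sum, sumZQ D x]

lemma var_eq (D : BalancedAssignment n k r c) (x : ℕ) (hxc : x ≤ c) :
    varDistinct D x
      = ((∑ S ∈ Finset.powersetCard x (Finset.univ : Finset (Fin c)),
            (numDistinct D S : ℚ)^2)
          - (∑ S ∈ Finset.powersetCard x (Finset.univ : Finset (Fin c)),
            (numDistinct D S : ℚ))^2 / (c.choose x : ℚ)) / (c.choose x : ℚ) := by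
  have hC : (c.choose x : ℚ) ≠ 0 := by
    have := Nat.choose_pos hxc
    positivity
  set A := ∑ S ∈ Finset.powersetCard x (Finset.univ : Finset (Fin c)),
    (numDistinct D S : ℚ) with hA
  rw [varDistinct, meanDistinct, ← hA]
  have h : ∀ S ∈ Finset.powersetCard x (Finset.univ : Finset (Fin c)),
      ((numDistinct D S : ℚ) - A / (c.choose x : ℚ))^2
        = (numDistinct D S : ℚ)^2
          - 2 * (A / (c.choose x : ℚ)) * (numDistinct D S : ℚ)
          + (A / (c.choose x : ℚ))^2 := by
    intro S _
    ring
  rw [Finset.sum_congr rfl h, Finset.sum_add_distrib, Finset.sum_sub_distrib,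
    ← Finset.mul_sum, ← hA, Finset.sum_const, nsmul_eq_mul, card_pwc]
  field_simp
  ring

end Main

/-- If a proximally compact balanced `(n,k,r,c)` assignment `D` exists, then for
every `1 ≤ x ≤ c` and every balanced `(n,k,r,c)` assignment `D₁`,
`∑_m m^{D₁}(m)·g(m,x) ≥ ∑_m m^{D}(m)·g(m,x)`; consequently `D` minimizes the
variance of the number of distinct jobs received. -/
theorem proximally_compact_min_variance (n k r c : ℕ)
    (D D₁ : BalancedAssignment n k r c)
    (hprox : ∃ ℓ, ∀ m, pairCount D m ≠ 0 → m = ℓ ∨ m = ℓ + 1)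
    (x : ℕ) (hx1 : 1 ≤ x) (hxc : x ≤ c) :
    (∑ m ∈ Finset.range (r + 1), (pairCount D m : ℤ) * gval c r m x
        ≤ ∑ m ∈ Finset.range (r + 1), (pairCount D₁ m : ℤ) * gval c r m x)
      ∧ varDistinct D x ≤ varDistinct D₁ x  := by
  classical
  obtain ⟨ℓ, hℓ⟩ := hprox
  have hstep : ∀ i : ℕ, ch ((c:ℤ) - 2*r + ((i+1 : ℕ) : ℤ)) x - ch ((c:ℤ) - 2*r + (i : ℤ)) x
      = ch ((c:ℤ) - 2*r + i) ((x:ℤ) - 1) := by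
    intro i
    have h := ch_pascal ((c:ℤ) - 2*r + i) x (by exact_mod_cast hx1)
    have harg : ((c:ℤ) - 2*r + ((i+1 : ℕ) : ℤ)) = ((c:ℤ) - 2*r + i) + 1 := by
      push_cast; ring
    rw [harg, h]; ring
  have hN : ∑ m ∈ Finset.range (r+1), (pairCount D m : ℤ)
      = ∑ m ∈ Finset.range (r+1), (pairCount D₁ m : ℤ) := by rw [sum_pc, sum_pc]
  have hM : ∑ m ∈ Finset.range (r+1), (m:ℤ) * (pairCount D m : ℤ)
      = ∑ m ∈ Finset.range (r+1), (m:ℤ) * (pairCount D₁ m : ℤ) := by rw [sum_mpc, sum_mpc]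
  have hsw : SW D x ≤ SW D₁ x := by
    rw [SW, SW]
    refine core_exchange (fun m => ch ((c:ℤ) - 2*r + m) x) ?_ r
      (pairCount D) (pairCount D₁) hN hM ℓ hℓ
    intro i j hij
    rw [hstep i, hstep j]
    apply ch_mono
    · have h1 : (1:ℤ) ≤ (x:ℤ) := by exact_mod_cast hx1
      omega
    · have h2 : (i:ℤ) ≤ (j:ℤ) := by exact_mod_cast hij
      omega
  constructor
  · rw [gsum D x hx1, gsum D₁ x hx1]
    linarith
  · have hC : (0:ℚ) < (c.choose x : ℚ) := by exact_mod_cast Nat.choose_pos hxc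
    rw [var_eq D x hxc, var_eq D₁ x hxc, sum_nd D x, sum_nd D₁ x,
      sum_ndsq D x, sum_ndsq D₁ x]
    have hswq : (SW D x : ℚ) ≤ (SW D₁ x : ℚ) := by exact_mod_cast hsw
    gcongr
end
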